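/- arXiv:1712.08780 — 2 statements merged into one kernel-verified Lean document; each statement's English description precedes it below -/
import Mathlib

section
/- Let G and H be graphs, let v ∈ V(H), and let S be a legal open neighborhood sequence in the direct product G × H. Then the number of vertices of S lying in the G-layer G^v = {(g,v) : g ∈ V(G)} is at most γ_gr^t(G). -/
open SimpleGraph

/-- A legal open neighborhood sequence in `G`. -/
def IsOpenLegal {α : Type*} (G : SimpleGraph α) (L : List α) : Prop :=
  L.Nodup ∧ ∀ i : Fin L.length, ∃ w, G.Adj (L.get i) w ∧
    ∀ j : Fin L.length, j < i → ¬ G.Adj (L.get j) w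

/-- The Grundy total domination number of `G`. -/
noncomputable def grundyT {α : Type*} (G : SimpleGraph α) : ℕ :=
  sSup {n | ∃ L : List α, IsOpenLegal G L ∧ L.length = n}

/-- A legal closed neighborhood (dominating) sequence in `G`. -/
def IsClosedLegal {α : Type*} (G : SimpleGraph α) (L : List α) : Prop :=
  L.Nodup ∧ ∀ i : Fin L.length, ∃ w, (G.Adj (L.get i) w ∨ L.get i = w) ∧
    ∀ j : Fin L.length, j < i → ¬ (G.Adj (L.get j) w ∨ L.get j = w)

/-- The Grundy domination number of `G`. -/
noncomputable def grundyDom {α : Type*} (G : SimpleGraph α) : ℕ :=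
  sSup {n | ∃ L : List α, IsClosedLegal G L ∧ L.length = n}

/-- The direct (tensor) product of simple graphs. -/
def directProd {α β : Type*} (G : SimpleGraph α) (H : SimpleGraph β) : SimpleGraph (α × β) where
  Adj x y := G.Adj x.1 y.1 ∧ H.Adj x.2 y.2
  symm := ⟨fun _ _ h => ⟨h.1.symm, h.2.symm⟩⟩
  loopless := ⟨fun x h => h.1.ne rfl⟩

/-- The lexicographic product of simple graphs. -/
def lexProd {α β : Type*} (G : SimpleGraph α) (H : SimpleGraph β) : SimpleGraph (α × β) where
  Adj x y := G.Adj x.1 y.1 ∨ (x.1 = y.1 ∧ H.Adj x.2 y.2)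
  symm := by
    constructor
    rintro x y (h | ⟨h1, h2⟩)
    · exact Or.inl h.symm
    · exact Or.inr ⟨h1.symm, h2.symm⟩
  loopless := by
    constructor
    rintro x (h | ⟨_, h⟩)
    · exact h.ne rfl
    · exact h.ne rfl

/-- The strong product of simple graphs. -/
def strongProd {α β : Type*} (G : SimpleGraph α) (H : SimpleGraph β) : SimpleGraph (α × β) where
  Adj x y := (G.Adj x.1 y.1 ∧ x.2 = y.2) ∨ (x.1 = y.1 ∧ H.Adj x.2 y.2) ∨
    (G.Adj x.1 y.1 ∧ H.Adj x.2 y.2)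
  symm := by
    constructor
    rintro x y (⟨h, e⟩ | ⟨e, h⟩ | ⟨h1, h2⟩)
    · exact Or.inl ⟨h.symm, e.symm⟩
    · exact Or.inr (Or.inl ⟨e.symm, h.symm⟩)
    · exact Or.inr (Or.inr ⟨h1.symm, h2.symm⟩)
  loopless := by
    constructor
    rintro x (⟨h, _⟩ | ⟨_, h⟩ | ⟨h, _⟩)
    · exact h.ne rfl
    · exact h.ne rfl
    · exact h.ne rfl

/-- The minimum number of complete bipartite subgraphs of `G` covering all edges of `G`. -/
noncomputable def bc {α : Type*} (G : SimpleGraph α) : ℕ :=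
  sInf {k | ∃ A B : Fin k → Set α,
    (∀ i a b, a ∈ A i → b ∈ B i → G.Adj a b) ∧
    (∀ u v, G.Adj u v → ∃ i, (u ∈ A i ∧ v ∈ B i) ∨ (v ∈ A i ∧ u ∈ B i))}

/-- `aD G L` is the number of entries of `L` not adjacent to any earlier entry. -/
noncomputable def aD {α : Type*} (G : SimpleGraph α) (L : List α) : ℕ :=
  {i : Fin L.length | ∀ j : Fin L.length, j < i → ¬ G.Adj (L.get j) (L.get i)}.ncard

/-- The vertex cover number of `G`. -/
noncomputable def vertexCoverNum {α : Type*} (G : SimpleGraph α) : ℕ :=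
  sInf {n | ∃ S : Finset α, S.card = n ∧ ∀ u v, G.Adj u v → u ∈ S ∨ v ∈ S}

/-- The independence number of `G`. -/
noncomputable def indepNum {α : Type*} (G : SimpleGraph α) : ℕ :=
  sSup {n | ∃ S : Finset α, S.card = n ∧ ∀ u ∈ S, ∀ v ∈ S, ¬ G.Adj u v}

theorem layer_count_le_grundyT {α β : Type*} [Fintype α] [Fintype β] [DecidableEq β]
    (G : SimpleGraph α) (H : SimpleGraph β) (v : β) (S : List (α × β))
    (hS : IsOpenLegal (directProd G H) S) :
    (S.filter (fun x => x.2 = v)).length ≤ grundyT G := by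
  set F := S.filter (fun x => x.2 = v) with hF
  set L := F.map Prod.fst with hL
  obtain ⟨f, hf⟩ := List.sublist_iff_exists_fin_orderEmbedding_get_eq.mp
    (List.filter_sublist (l := S) (p := fun x => decide (x.2 = v)))
  have hFv : ∀ i : Fin F.length, (F.get i).2 = v := by
    intro i
    have := List.get_mem F i
    have := List.of_mem_filter this
    simpa using this
  have hleg : IsOpenLegal G L := by
    constructor
    · refine List.Nodup.map_on ?_ (hS.1.filter _)
      intro x hx y hy hxy
      have hx2 : x.2 = v := by simpa using List.of_mem_filter hx
      have hy2 : y.2 = v := by simpa using List.of_mem_filter hy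
      exact Prod.ext hxy (hx2.trans hy2.symm)
    · intro i
      have hlen : L.length = F.length := List.length_map _
      set i' : Fin F.length := Fin.cast hlen i with hi'
      obtain ⟨w, hw, hwj⟩ := hS.2 (f i')
      have hgetL : ∀ k : Fin L.length, L.get k = (F.get (Fin.cast hlen k)).1 := by
        intro k; simp [hL]
      have hSF : S.get (f i') = F.get i' := (hf i').symm
      rw [hSF] at hw
      refine ⟨w.1, ?_, ?_⟩
      · have := hw.1; rw [hgetL i]; exact this
      · intro j hj hadj
        set j' : Fin F.length := Fin.cast hlen j with hj'
        have hji : f j' < f i' := f.lt_iff_lt.mpr (by simpa [i', j'] using hj)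
        refine hwj (f j') hji ?_
        rw [(hf j').symm]
        refine ⟨?_, ?_⟩
        · rw [hgetL j] at hadj; exact hadj
        · rw [hFv j']; rw [← hFv i']; exact hw.2
  have hmem : L.length ∈ {n | ∃ L' : List α, IsOpenLegal G L' ∧ L'.length = n} :=
    ⟨L, hleg, rfl⟩
  have hbdd : BddAbove {n | ∃ L' : List α, IsOpenLegal G L' ∧ L'.length = n} := by
    refine ⟨Fintype.card α, ?_⟩
    rintro n ⟨L', hL', rfl⟩
    exact hL'.1.length_le_card
  calc F.length = L.length := (List.length_map _).symm
    _ ≤ grundyT G := le_csSup hbdd hmem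
end

section
/- For n ≥ 2, the Grundy total domination number of the path P_n equals n if n is even and n − 1 if n is odd; for n ≥ 3, the Grundy total domination number of the cycle C_n equals n − 2 if n is even and n − 1 if n is odd. -/
open SimpleGraph

section GrundyAux

open scoped Fin.NatCast Fin.CommRing

lemma legal_nil {α : Type*} (G : SimpleGraph α) : IsOpenLegal G [] :=
  ⟨List.nodup_nil, fun i => i.elim0⟩

lemma exists_witness {α : Type*} {G : SimpleGraph α} {L : List α} (h : IsOpenLegal G L) :
    ∃ W : Fin L.length → α, (∀ i, G.Adj (L.get i) (W i)) ∧
      (∀ i j : Fin L.length, j < i → ¬ G.Adj (L.get j) (W i)) ∧ Function.Injective W := by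
  choose W h1 h2 using h.2
  refine ⟨W, h1, h2, fun i j hij => ?_⟩
  by_contra hne
  rcases lt_or_gt_of_ne hne with h' | h'
  · exact h2 j i h' (hij ▸ h1 i)
  · exact h2 i j h' (hij ▸ h1 j)

lemma grundyT_eq {α : Type*} (G : SimpleGraph α) (k : ℕ)
    (hub : ∀ L : List α, IsOpenLegal G L → L.length ≤ k)
    (hex : ∃ L : List α, IsOpenLegal G L ∧ L.length = k) : grundyT G = k := by
  have h0 : (0:ℕ) ∈ {n | ∃ L : List α, IsOpenLegal G L ∧ L.length = n} := ⟨[], legal_nil G, rfl⟩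
  apply le_antisymm
  · exact csSup_le ⟨0, h0⟩ (by rintro m ⟨L, hL, rfl⟩; exact hub L hL)
  · exact le_csSup ⟨k, by rintro m ⟨L, hL, rfl⟩; exact hub L hL⟩ hex

lemma legal_length_le {n : ℕ} {G : SimpleGraph (Fin n)} {L : List (Fin n)}
    (h : IsOpenLegal G L) : L.length ≤ n := by
  simpa using List.Nodup.length_le_card h.1

lemma path_no_full {n : ℕ} (hodd : ¬ Even n) {L : List (Fin n)}
    (hL : IsOpenLegal (pathGraph n) L) : L.length ≠ n := by
  intro hlen
  obtain ⟨W, h1, h2, hWinj⟩ := exists_witness hL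
  have hvinj : Function.Injective L.get := List.nodup_iff_injective_get.mp hL.1
  have hcard : Fintype.card (Fin L.length) = Fintype.card (Fin n) := by simp [hlen]
  have hvbij : Function.Bijective L.get :=
    (Fintype.bijective_iff_injective_and_card _).mpr ⟨hvinj, hcard⟩
  have hWbij : Function.Bijective W :=
    (Fintype.bijective_iff_injective_and_card _).mpr ⟨hWinj, hcard⟩
  have hflip : ∀ i, (W i).val % 2 ≠ (L.get i).val % 2 := by
    intro i
    have := h1 i
    rw [pathGraph_adj] at this
    omega
  have count : ∀ (f : Fin L.length → Fin n), Function.Bijective f → ∀ r : ℕ,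
      (Finset.univ.filter fun i => (f i).val % 2 = r).card
        = (Finset.univ.filter fun x : Fin n => x.val % 2 = r).card := by
    intro f hf r
    apply Finset.card_equiv (Equiv.ofBijective f hf)
    intro i; simp [Equiv.ofBijective]
  have c1 := count _ hvbij 0
  have c2 := count _ hWbij 0
  have c3 : (Finset.univ.filter fun i => (W i).val % 2 = 0)
      = (Finset.univ.filter fun i : Fin L.length => ¬ ((L.get i).val % 2 = 0)) := by
    apply Finset.filter_congr; intro i _
    have := hflip i; constructor <;> intro h <;> omega
  have c4 := Finset.card_filter_add_card_filter_not
    (s := (Finset.univ : Finset (Fin L.length))) (p := fun i => (L.get i).val % 2 = 0)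
  rw [Finset.card_univ] at c4
  simp only [Fintype.card_fin, hlen] at c4
  rw [c3] at c2
  rw [c1, c2] at c4
  exact hodd ⟨(Finset.univ.filter fun x : Fin n => x.val % 2 = 0).card, by omega⟩

theorem cycAdj (n : ℕ) (hn : 2 ≤ n) (u v : Fin n) : (cycleGraph n).Adj u v ↔
    (u.val + 1 = v.val ∨ v.val + 1 = u.val ∨ (u.val = 0 ∧ v.val = n - 1) ∨ (v.val = 0 ∧ u.val = n - 1)) := by
  haveI : NeZero n := ⟨by omega⟩
  have hone : (1 : Fin n).val = 1 := by rw [Fin.val_one']; exact Nat.mod_eq_of_lt hn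
  have hval : ∀ w : Fin n, (w + 1).val = (w.val + 1) % n := fun w => by
    rw [Fin.add_def, hone]
  have key : ∀ a b : Fin n, ((b - a).val = 1 ↔ (a.val + 1 = b.val ∨ (a.val = n - 1 ∧ b.val = 0))) := by
    intro a b
    have h1 : (b - a).val = 1 ↔ b = a + 1 := by
      rw [show (1:ℕ) = (1 : Fin n).val from hone.symm, Fin.val_eq_val, sub_eq_iff_eq_add']
    rw [h1, Fin.ext_iff, hval]
    have ha := a.isLt; have hb := b.isLt
    rcases Nat.lt_or_ge (a.val + 1) n with h' | h'
    · rw [Nat.mod_eq_of_lt h']; omega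
    · rw [show a.val + 1 = n by omega, Nat.mod_self]; omega
  rw [cycleGraph_adj', key, key]
  tauto

lemma cycle_nbrs {n : ℕ} [NeZero n] (hn : 3 ≤ n) (u : Fin n) :
    (cycleGraph n).Adj u (u + 1) ∧ (cycleGraph n).Adj u (u - 1) ∧ u + 1 ≠ u - 1 := by
  have hone : (1 : Fin n).val = 1 := by
    rw [Fin.val_one']; exact Nat.mod_eq_of_lt (by omega)
  refine ⟨?_, ?_, ?_⟩
  · rw [cycleGraph_adj']; right; rw [show u + 1 - u = 1 by ring]; exact hone
  · rw [cycleGraph_adj']; left; rw [show u - (u - 1) = 1 by ring]; exact hone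
  · intro h
    have h2 : u + 1 - (u - 1) = 0 := by rw [h]; ring
    rw [show u + 1 - (u - 1) = 1 + 1 by ring] at h2
    have h3 : ((1 : Fin n) + 1).val = 0 := by rw [h2]; rfl
    rw [Fin.add_def, hone] at h3
    have h4 : (1 + 1) % n = 0 := h3
    rw [Nat.mod_eq_of_lt (by omega)] at h4
    omega

lemma cycle_no_full {n : ℕ} (hn : 3 ≤ n) {L : List (Fin n)}
    (hL : IsOpenLegal (cycleGraph n) L) : L.length ≠ n := by
  intro hlen
  obtain ⟨W, h1, h2, hWinj⟩ := exists_witness hL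
  have hvinj : Function.Injective L.get := List.nodup_iff_injective_get.mp hL.1
  have hvbij : Function.Bijective L.get :=
    (Fintype.bijective_iff_injective_and_card _).mpr ⟨hvinj, by simp [hlen]⟩
  haveI : NeZero n := ⟨by omega⟩
  have hpos : 0 < L.length := by omega
  set i0 : Fin L.length := ⟨L.length - 1, by omega⟩ with hi0
  set u := W i0 with hu
  obtain ⟨ha1, ha2, hne⟩ := cycle_nbrs hn u
  by_cases hc : u + 1 = L.get i0
  · obtain ⟨j, hj⟩ := hvbij.2 (u - 1)
    have hjne : j ≠ i0 := by
      intro h; rw [h, ← hc] at hj; exact hne hj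
    have hjlt : j < i0 := by
      rw [Fin.lt_def, hi0]
      have h4 := j.isLt
      have h5 : j.val ≠ i0.val := fun h => hjne (Fin.ext h)
      rw [hi0] at h5
      simp only [] at *
      omega
    exact h2 i0 j hjlt (by rw [hj]; exact ha2.symm)
  · obtain ⟨j, hj⟩ := hvbij.2 (u + 1)
    have hjne : j ≠ i0 := by intro h; rw [h] at hj; exact hc hj.symm
    have hjlt : j < i0 := by
      rw [Fin.lt_def, hi0]
      have h4 := j.isLt
      have h5 : j.val ≠ i0.val := fun h => hjne (Fin.ext h)
      rw [hi0] at h5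
      simp only [] at *
      omega
    exact h2 i0 j hjlt (by rw [hj]; exact ha1.symm)

lemma cycle_no_sub1 {n : ℕ} (hn : 3 ≤ n) (heven : Even n) {L : List (Fin n)}
    (hL : IsOpenLegal (cycleGraph n) L) : L.length ≠ n - 1 := by
  intro hlen
  haveI : NeZero n := ⟨by omega⟩
  obtain ⟨W, h1, h2, hWinj⟩ := exists_witness hL
  have hvinj : Function.Injective L.get := List.nodup_iff_injective_get.mp hL.1
  obtain ⟨t, ht⟩ := heven
  have hns : ¬ Function.Surjective L.get := by
    intro hs
    have := Fintype.card_le_of_surjective _ hs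
    simp [hlen] at this
    omega
  rw [Function.Surjective] at hns
  push_neg at hns
  obtain ⟨m, hm⟩ := hns
  have hflip : ∀ a b : Fin n, (cycleGraph n).Adj a b → a.val % 2 ≠ b.val % 2 := by
    intro a b hab
    rw [cycAdj n (by omega)] at hab
    have := a.isLt; have := b.isLt
    omega
  have himage : ∀ y : Fin n, y ≠ m → ∃ i, L.get i = y := by
    have hsub : (Finset.univ.image L.get) ⊆ Finset.univ.erase m := by
      intro x hx
      rw [Finset.mem_image] at hx
      obtain ⟨i, _, rfl⟩ := hx
      exact Finset.mem_erase.mpr ⟨fun h => (hm i) h, Finset.mem_univ _⟩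
    have hcard : (Finset.univ.erase m).card ≤ (Finset.univ.image L.get).card := by
      rw [Finset.card_erase_of_mem (Finset.mem_univ m),
        Finset.card_image_of_injective _ hvinj]
      simp [hlen]
    have heq := Finset.eq_of_subset_of_card_le hsub hcard
    intro y hy
    have : y ∈ Finset.univ.image L.get := by
      rw [heq]; exact Finset.mem_erase.mpr ⟨hy, Finset.mem_univ _⟩
    rw [Finset.mem_image] at this
    obtain ⟨i, _, hi⟩ := this
    exact ⟨i, hi⟩
  classical
  set B := Finset.univ.filter (fun i : Fin L.length => (L.get i).val % 2 ≠ m.val % 2) with hB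
  have hBne : B.Nonempty := by
    obtain ⟨hadj, -, -⟩ := cycle_nbrs hn m
    have hmne : m + 1 ≠ m := by
      intro h
      have h0 : m + 1 = m + 0 := by simpa using h
      have h1 := add_left_cancel h0
      have : (1 : Fin n).val = 0 := by rw [h1]; rfl
      rw [Fin.val_one'] at this
      rw [Nat.mod_eq_of_lt (by omega)] at this
      omega
    obtain ⟨i, hi⟩ := himage (m + 1) hmne
    refine ⟨i, ?_⟩
    rw [hB, Finset.mem_filter]
    refine ⟨Finset.mem_univ _, ?_⟩
    rw [hi]
    exact fun h => hflip m (m+1) hadj h.symm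
  obtain ⟨i0, hi0B, hi0max⟩ := B.exists_max_image (fun i => i.val) hBne
  have hvi0 : (L.get i0).val % 2 ≠ m.val % 2 := by
    rw [hB, Finset.mem_filter] at hi0B; exact hi0B.2
  set u := W i0 with hu
  have hadju : (cycleGraph n).Adj (L.get i0) u := h1 i0
  have hup : u.val % 2 = m.val % 2 := by
    have := hflip _ _ hadju; omega
  obtain ⟨ha1, ha2, hne⟩ := cycle_nbrs hn u
  have key : ∀ u' : Fin n, (cycleGraph n).Adj u u' → u' ≠ L.get i0 → False := by
    intro u' hadj' hne'
    have hpar' : u'.val % 2 ≠ m.val % 2 := by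
      have := hflip u u' hadj'; omega
    have hu'm : u' ≠ m := by
      intro h; rw [h] at hpar'; exact hpar' rfl
    obtain ⟨j, hj⟩ := himage u' hu'm
    have hjB : j ∈ B := by
      rw [hB, Finset.mem_filter]
      exact ⟨Finset.mem_univ _, by rw [hj]; exact hpar'⟩
    have hjne : j ≠ i0 := by
      intro h; rw [h] at hj; exact hne' hj.symm
    have hjlt : j < i0 := by
      have h5 := hi0max j hjB
      have h6 : j.val ≠ i0.val := fun h => hjne (Fin.ext h)
      exact Fin.lt_def.mpr (by omega)
    exact h2 i0 j hjlt (by rw [hj]; exact hadj'.symm)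
  by_cases hc : u + 1 = L.get i0
  · exact key (u - 1) ha2 (fun h => hne (by rw [hc, h]))
  · exact key (u + 1) ha1 hc

def natL (n : ℕ) [NeZero n] (g : ℕ → ℕ) (k : ℕ) : List (Fin n) :=
  (List.range k).map (fun j => (g j : Fin n))

lemma natL_length {n : ℕ} [NeZero n] (g : ℕ → ℕ) (k : ℕ) : (natL n g k).length = k := by
  simp [natL]

lemma natL_get {n : ℕ} [NeZero n] {g : ℕ → ℕ} {k : ℕ}
    (i : Fin (natL n g k).length) : (natL n g k).get i = ((g i.val : ℕ) : Fin n) := by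
  have hi : i.val < k := by simpa [natL] using i.isLt
  show (natL n g k)[i.val] = _
  simp [natL]

lemma val_cast_lt {n : ℕ} [NeZero n] {x : ℕ} (hx : x < n) : ((x : Fin n)).val = x := by
  rw [Fin.val_natCast]; exact Nat.mod_eq_of_lt hx

lemma legal_of_nat {n : ℕ} [NeZero n] (G : SimpleGraph (Fin n)) (g w : ℕ → ℕ) (k : ℕ)
    (hg : ∀ j < k, g j < n)
    (hinj : ∀ x < k, ∀ y < k, g x = g y → x = y)
    (hadj : ∀ i < k, G.Adj ((g i : ℕ) : Fin n) ((w i : ℕ) : Fin n))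
    (hnadj : ∀ i < k, ∀ j < i, ¬ G.Adj ((g j : ℕ) : Fin n) ((w i : ℕ) : Fin n)) :
    IsOpenLegal G (natL n g k) := by
  constructor
  · rw [List.nodup_iff_injective_get]
    intro i j hij
    rw [natL_get, natL_get] at hij
    have hi : i.val < k := by simpa [natL] using i.isLt
    have hj : j.val < k := by simpa [natL] using j.isLt
    have : g i.val = g j.val := by
      have := congrArg Fin.val hij
      rwa [val_cast_lt (hg _ hi), val_cast_lt (hg _ hj)] at this
    exact Fin.ext (hinj _ hi _ hj this)
  · intro i
    have hi : i.val < k := by simpa [natL] using i.isLt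
    refine ⟨((w i.val : ℕ) : Fin n), ?_, ?_⟩
    · rw [natL_get]; exact hadj _ hi
    · intro j hj
      rw [natL_get]
      exact hnadj _ hi _ hj

lemma legal_asc_path {n k : ℕ} [NeZero n] (hk : k < n) :
    IsOpenLegal (pathGraph n) (natL n id k) := by
  apply legal_of_nat _ id (fun i => i + 1) k
  · intro j hj; simpa using by omega
  · intro x _ y _ h; exact h
  · intro i hi
    rw [pathGraph_adj, val_cast_lt (by simp only [id_eq]; omega : (id i : ℕ) < n), val_cast_lt (by omega : i + 1 < n)]
    simp only [id_eq]; exact Or.inl trivial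
  · intro i hi j hj hadj
    rw [pathGraph_adj, val_cast_lt (by simp only [id_eq]; omega : (id j : ℕ) < n), val_cast_lt (by omega : i + 1 < n)] at hadj
    simp only [id_eq] at hadj
    omega

lemma legal_asc_cycle {n k : ℕ} (hn : 2 ≤ n) (hk : k ≤ n - 2) :
    haveI : NeZero n := ⟨by omega⟩
    IsOpenLegal (cycleGraph n) (natL n id k) := by
  haveI : NeZero n := ⟨by omega⟩
  apply legal_of_nat _ id (fun i => i + 1) k
  · intro j hj; simpa using by omega
  · intro x _ y _ h; exact h
  · intro i hi
    rw [cycAdj n hn, val_cast_lt (by simp only [id_eq]; omega : (id i : ℕ) < n), val_cast_lt (by omega : i + 1 < n)]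
    simp only [id_eq]; exact Or.inl trivial
  · intro i hi j hj hadj
    rw [cycAdj n hn, val_cast_lt (by simp only [id_eq]; omega : (id j : ℕ) < n), val_cast_lt (by omega : i + 1 < n)] at hadj
    simp only [id_eq] at hadj
    omega

def eoG (h : ℕ) : ℕ → ℕ := fun i => if i < h then 2 * i else 4 * h - 1 - 2 * i
def eoW (h : ℕ) : ℕ → ℕ := fun i => if i < h then 2 * i + 1 else 4 * h - 2 - 2 * i

lemma eoG_lt {h n : ℕ} (hn : 2 * h ≤ n) (hh : 1 ≤ h) : ∀ j < 2 * h, eoG h j < n := by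
  intro j hj; unfold eoG; split_ifs <;> omega

lemma eoW_lt {h n : ℕ} (hn : 2 * h ≤ n) (hh : 1 ≤ h) : ∀ j < 2 * h, eoW h j < n := by
  intro j hj; unfold eoW; split_ifs <;> omega

lemma eo_inj {h : ℕ} : ∀ x < 2 * h, ∀ y < 2 * h, eoG h x = eoG h y → x = y := by
  intro x hx y hy; unfold eoG; split_ifs <;> omega

lemma legal_eo_path {h : ℕ} (hh : 1 ≤ h) :
    haveI : NeZero (2 * h) := ⟨by omega⟩
    IsOpenLegal (pathGraph (2 * h)) (natL (2 * h) (eoG h) (2 * h)) := by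
  haveI : NeZero (2 * h) := ⟨by omega⟩
  apply legal_of_nat _ _ (eoW h) _ (eoG_lt le_rfl hh) eo_inj
  · intro i hi
    rw [pathGraph_adj, val_cast_lt (eoG_lt le_rfl hh i hi), val_cast_lt (eoW_lt le_rfl hh i hi)]
    unfold eoG eoW; split_ifs <;> omega
  · intro i hi j hj hadj
    rw [pathGraph_adj, val_cast_lt (eoG_lt le_rfl hh j (by omega)),
      val_cast_lt (eoW_lt le_rfl hh i hi)] at hadj
    unfold eoG eoW at hadj; split_ifs at hadj <;> omega

lemma legal_eo_cycle {h : ℕ} (hh : 1 ≤ h) :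
    IsOpenLegal (cycleGraph (2 * h + 1)) (natL (2 * h + 1) (eoG h) (2 * h)) := by
  have hn : 2 ≤ 2 * h + 1 := by omega
  apply legal_of_nat _ _ (eoW h) _ (eoG_lt (by omega) hh) eo_inj
  · intro i hi
    rw [cycAdj _ hn, val_cast_lt (eoG_lt (by omega) hh i hi), val_cast_lt (eoW_lt (by omega) hh i hi)]
    unfold eoG eoW; split_ifs <;> omega
  · intro i hi j hj hadj
    rw [cycAdj _ hn, val_cast_lt (eoG_lt (by omega) hh j (by omega)),
      val_cast_lt (eoW_lt (by omega) hh i hi)] at hadj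
    unfold eoG eoW at hadj; split_ifs at hadj <;> omega

end GrundyAux

theorem grundyT_path_cycle :
    (∀ n : ℕ, 2 ≤ n → grundyT (pathGraph n) = if Even n then n else n - 1) ∧
      (∀ n : ℕ, 3 ≤ n → grundyT (cycleGraph n) = if Even n then n - 2 else n - 1) := by
  constructor
  · intro n hn
    haveI : NeZero n := ⟨by omega⟩
    by_cases he : Even n
    · rw [if_pos he]
      obtain ⟨t, rfl⟩ := he
      rw [show t + t = 2 * t by ring]
      haveI : NeZero (2 * t) := ⟨by omega⟩
      apply grundyT_eq
      · exact fun L hL => legal_length_le hL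
      · exact ⟨natL (2 * t) (eoG t) (2 * t), legal_eo_path (by omega), natL_length _ _⟩
    · rw [if_neg he]
      apply grundyT_eq
      · intro L hL
        have h1 := legal_length_le hL
        have h2 := path_no_full he hL
        omega
      · exact ⟨natL n id (n - 1), legal_asc_path (by omega), by rw [natL_length]⟩
  · intro n hn
    haveI : NeZero n := ⟨by omega⟩
    by_cases he : Even n
    · rw [if_pos he]
      apply grundyT_eq
      · intro L hL
        have h1 := legal_length_le hL
        have h2 := cycle_no_full (by omega) hL
        have h3 := cycle_no_sub1 (by omega) he hL
        omega
      · exact ⟨natL n id (n - 2), legal_asc_cycle (by omega) le_rfl, by rw [natL_length]⟩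
    · rw [if_neg he]
      obtain ⟨t, rfl⟩ := Nat.not_even_iff_odd.mp he
      apply grundyT_eq
      · intro L hL
        have h1 := legal_length_le hL
        have h2 := cycle_no_full (by omega) hL
        omega
      · exact ⟨natL (2 * t + 1) (eoG t) (2 * t), legal_eo_cycle (by omega), by rw [natL_length]; omega⟩
end
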